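/- There exist a dimension d and four density matrices ρ₁, ρ₂, ρ₃, ρ₄ of dimension d such that the 4×4 real symmetric matrix E₄ with entries (E₄)ᵢⱼ = √(F(ρᵢ; ρⱼ)) is not positive semidefinite. -/

import Mathlib

open scoped Classical

open Matrix ComplexOrder

/-- The positive semidefinite square root of a matrix: the unique PSD square root
when the matrix is PSD, and `0` otherwise. -/
noncomputable def msqrt {n : Type*} [Fintype n] [DecidableEq n]
    (A : Matrix n n ℂ) : Matrix n n ℂ :=
  if h : A.PosSemidef then
    (h.1.eigenvectorUnitary : Matrix n n ℂ) *
      diagonal (fun i => ((Real.sqrt (h.1.eigenvalues i) : ℝ) : ℂ)) * star (h.1.eigenvectorUnitary : Matrix n n ℂ)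
  else 0

/-- Fidelity between two states: `F(ρ₁; ρ₂) = (tr √(√ρ₁ · ρ₂ · √ρ₁))²`. -/
noncomputable def fidelity {n : Type*} [Fintype n] [DecidableEq n]
    (ρ₁ ρ₂ : Matrix n n ℂ) : ℝ :=
  ((msqrt (msqrt ρ₁ * ρ₂ * msqrt ρ₁)).trace).re ^ 2

lemma msqrt_eq {n : Type*} [Fintype n] [DecidableEq n]
    {A B : Matrix n n ℂ} (hB : B.PosSemidef) (hAB : B * B = A) : msqrt A = B := by
  have hA : A.PosSemidef := by
    rw [← hAB]
    nth_rewrite 1 [← hB.isHermitian]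
    exact Matrix.posSemidef_conjTranspose_mul_self B
  rw [msqrt, dif_pos hA]
  open scoped MatrixOrder in
  have hs : CFC.sqrt A = B := CFC.sqrt_unique hAB hB.nonneg
  open scoped MatrixOrder in
  rw [← hs, CFC.sqrt_eq_cfc, cfc_nnreal_eq_real _ A hA.nonneg, hA.1.cfc_eq]
  simp only [IsHermitian.cfc, Unitary.conjStarAlgAut_apply]
  congr 2
  congr 1
  funext i
  simp [max_eq_left (hA.eigenvalues_nonneg i)]

lemma psd_smul {n : Type*} [Fintype n] [DecidableEq n]
    {A : Matrix n n ℂ} (hA : A.PosSemidef) {c : ℝ} (hc : 0 ≤ c) :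
    ((c : ℂ) • A).PosSemidef := by
  constructor
  · unfold Matrix.IsHermitian
    rw [Matrix.conjTranspose_smul, hA.1]
    congr 1
    simp [Complex.conj_ofReal]
  · intro x
    exact (hA.smul (a := (c : ℂ)) (Complex.zero_le_real.2 hc)).2 x

lemma fid_val {ρ₁ ρ₂ C : Matrix (Fin 2) (Fin 2) ℂ} (h₁ : ρ₁.PosSemidef)
    (hC : C.PosSemidef) (hproj : ρ₁ * ρ₁ = ρ₁) (hCC : C * C = ρ₁ * ρ₂ * ρ₁) :
    fidelity ρ₁ ρ₂ = (C.trace).re ^ 2 := by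
  unfold fidelity
  rw [msqrt_eq h₁ hproj, msqrt_eq hC hCC]

noncomputable def A0 : Matrix (Fin 2) (Fin 2) ℂ := !![1, 0; 0, 0]
noncomputable def w0 : Matrix (Fin 1) (Fin 2) ℂ := !![1, 0]
noncomputable def A1 : Matrix (Fin 2) (Fin 2) ℂ := !![(9/25), (12/25); (12/25), (16/25)]
noncomputable def w1 : Matrix (Fin 1) (Fin 2) ℂ := !![(3/5), (4/5)]
noncomputable def A2 : Matrix (Fin 2) (Fin 2) ℂ := !![0, 0; 0, 1]
noncomputable def w2 : Matrix (Fin 1) (Fin 2) ℂ := !![0, 1]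
noncomputable def A3 : Matrix (Fin 2) (Fin 2) ℂ := !![(16/25), (-12/25); (-12/25), (9/25)]
noncomputable def w3 : Matrix (Fin 1) (Fin 2) ℂ := !![(-4/5), (3/5)]

lemma hpsd0 : A0.PosSemidef := by
  have h : (w0)ᴴ * w0 = A0 := by
    ext a b
    fin_cases a <;> fin_cases b <;> simp [A0, A1, A2, A3, w0, w1, w2, w3, Matrix.mul_apply, Matrix.conjTranspose_apply, Fin.sum_univ_succ, Matrix.smul_apply, smul_eq_mul] <;> (try norm_num)
  exact h ▸ Matrix.posSemidef_conjTranspose_mul_self w0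

lemma hproj0 : A0 * A0 = A0 := by
  ext a b
  fin_cases a <;> fin_cases b <;> simp [A0, A1, A2, A3, w0, w1, w2, w3, Matrix.mul_apply, Matrix.conjTranspose_apply, Fin.sum_univ_succ, Matrix.smul_apply, smul_eq_mul] <;> (try norm_num)

lemma htr0 : A0.trace = 1 := by
  norm_num [Matrix.trace, A0, Fin.sum_univ_succ]

lemma hpsd1 : A1.PosSemidef := by
  have h : (w1)ᴴ * w1 = A1 := by
    ext a b
    fin_cases a <;> fin_cases b <;> simp [A0, A1, A2, A3, w0, w1, w2, w3, Matrix.mul_apply, Matrix.conjTranspose_apply, Fin.sum_univ_succ, Matrix.smul_apply, smul_eq_mul] <;> (try norm_num)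
  exact h ▸ Matrix.posSemidef_conjTranspose_mul_self w1

lemma hproj1 : A1 * A1 = A1 := by
  ext a b
  fin_cases a <;> fin_cases b <;> simp [A0, A1, A2, A3, w0, w1, w2, w3, Matrix.mul_apply, Matrix.conjTranspose_apply, Fin.sum_univ_succ, Matrix.smul_apply, smul_eq_mul] <;> (try norm_num)

lemma htr1 : A1.trace = 1 := by
  norm_num [Matrix.trace, A1, Fin.sum_univ_succ]

lemma hpsd2 : A2.PosSemidef := by
  have h : (w2)ᴴ * w2 = A2 := by
    ext a b
    fin_cases a <;> fin_cases b <;> simp [A0, A1, A2, A3, w0, w1, w2, w3, Matrix.mul_apply, Matrix.conjTranspose_apply, Fin.sum_univ_succ, Matrix.smul_apply, smul_eq_mul] <;> (try norm_num)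
  exact h ▸ Matrix.posSemidef_conjTranspose_mul_self w2

lemma hproj2 : A2 * A2 = A2 := by
  ext a b
  fin_cases a <;> fin_cases b <;> simp [A0, A1, A2, A3, w0, w1, w2, w3, Matrix.mul_apply, Matrix.conjTranspose_apply, Fin.sum_univ_succ, Matrix.smul_apply, smul_eq_mul] <;> (try norm_num)

lemma htr2 : A2.trace = 1 := by
  norm_num [Matrix.trace, A2, Fin.sum_univ_succ]

lemma hpsd3 : A3.PosSemidef := by
  have h : (w3)ᴴ * w3 = A3 := by
    ext a b
    fin_cases a <;> fin_cases b <;> simp [A0, A1, A2, A3, w0, w1, w2, w3, Matrix.mul_apply, Matrix.conjTranspose_apply, Fin.sum_univ_succ, Matrix.smul_apply, smul_eq_mul] <;> (try norm_num)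
  exact h ▸ Matrix.posSemidef_conjTranspose_mul_self w3

lemma hproj3 : A3 * A3 = A3 := by
  ext a b
  fin_cases a <;> fin_cases b <;> simp [A0, A1, A2, A3, w0, w1, w2, w3, Matrix.mul_apply, Matrix.conjTranspose_apply, Fin.sum_univ_succ, Matrix.smul_apply, smul_eq_mul] <;> (try norm_num)

lemma htr3 : A3.trace = 1 := by
  norm_num [Matrix.trace, A3, Fin.sum_univ_succ]

lemma hf00 : fidelity A0 A0 = (1 : ℝ) ^ 2 := by
  have hC : (((1 : ℝ) : ℂ) • A0).PosSemidef := psd_smul hpsd0 (by norm_num)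
  have hCC : (((1 : ℝ) : ℂ) • A0) * (((1 : ℝ) : ℂ) • A0) = A0 * A0 * A0 := by
    ext a b
    fin_cases a <;> fin_cases b <;> simp [A0, A1, A2, A3, w0, w1, w2, w3, Matrix.mul_apply, Matrix.conjTranspose_apply, Fin.sum_univ_succ, Matrix.smul_apply, smul_eq_mul] <;> (try norm_num)
  rw [fid_val hpsd0 hC hproj0 hCC]
  rw [Matrix.trace_smul, htr0]
  norm_num

lemma hs00 : Real.sqrt (fidelity A0 A0) = (1 : ℝ) := by
  rw [hf00, Real.sqrt_sq (by norm_num)]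

lemma hf01 : fidelity A0 A1 = ((3/5) : ℝ) ^ 2 := by
  have hC : ((((3/5) : ℝ) : ℂ) • A0).PosSemidef := psd_smul hpsd0 (by norm_num)
  have hCC : ((((3/5) : ℝ) : ℂ) • A0) * ((((3/5) : ℝ) : ℂ) • A0) = A0 * A1 * A0 := by
    ext a b
    fin_cases a <;> fin_cases b <;> simp [A0, A1, A2, A3, w0, w1, w2, w3, Matrix.mul_apply, Matrix.conjTranspose_apply, Fin.sum_univ_succ, Matrix.smul_apply, smul_eq_mul] <;> (try norm_num)
  rw [fid_val hpsd0 hC hproj0 hCC]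
  rw [Matrix.trace_smul, htr0]
  norm_num

lemma hs01 : Real.sqrt (fidelity A0 A1) = ((3/5) : ℝ) := by
  rw [hf01, Real.sqrt_sq (by norm_num)]

lemma hf02 : fidelity A0 A2 = (0 : ℝ) ^ 2 := by
  have hC : (((0 : ℝ) : ℂ) • A0).PosSemidef := psd_smul hpsd0 (by norm_num)
  have hCC : (((0 : ℝ) : ℂ) • A0) * (((0 : ℝ) : ℂ) • A0) = A0 * A2 * A0 := by
    ext a b
    fin_cases a <;> fin_cases b <;> simp [A0, A1, A2, A3, w0, w1, w2, w3, Matrix.mul_apply, Matrix.conjTranspose_apply, Fin.sum_univ_succ, Matrix.smul_apply, smul_eq_mul] <;> (try norm_num)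
  rw [fid_val hpsd0 hC hproj0 hCC]
  rw [Matrix.trace_smul, htr0]
  norm_num

lemma hs02 : Real.sqrt (fidelity A0 A2) = (0 : ℝ) := by
  rw [hf02, Real.sqrt_sq (by norm_num)]

lemma hf03 : fidelity A0 A3 = ((4/5) : ℝ) ^ 2 := by
  have hC : ((((4/5) : ℝ) : ℂ) • A0).PosSemidef := psd_smul hpsd0 (by norm_num)
  have hCC : ((((4/5) : ℝ) : ℂ) • A0) * ((((4/5) : ℝ) : ℂ) • A0) = A0 * A3 * A0 := by
    ext a b
    fin_cases a <;> fin_cases b <;> simp [A0, A1, A2, A3, w0, w1, w2, w3, Matrix.mul_apply, Matrix.conjTranspose_apply, Fin.sum_univ_succ, Matrix.smul_apply, smul_eq_mul] <;> (try norm_num)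
  rw [fid_val hpsd0 hC hproj0 hCC]
  rw [Matrix.trace_smul, htr0]
  norm_num

lemma hs03 : Real.sqrt (fidelity A0 A3) = ((4/5) : ℝ) := by
  rw [hf03, Real.sqrt_sq (by norm_num)]

lemma hf10 : fidelity A1 A0 = ((3/5) : ℝ) ^ 2 := by
  have hC : ((((3/5) : ℝ) : ℂ) • A1).PosSemidef := psd_smul hpsd1 (by norm_num)
  have hCC : ((((3/5) : ℝ) : ℂ) • A1) * ((((3/5) : ℝ) : ℂ) • A1) = A1 * A0 * A1 := by
    ext a b
    fin_cases a <;> fin_cases b <;> simp [A0, A1, A2, A3, w0, w1, w2, w3, Matrix.mul_apply, Matrix.conjTranspose_apply, Fin.sum_univ_succ, Matrix.smul_apply, smul_eq_mul] <;> (try norm_num)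
  rw [fid_val hpsd1 hC hproj1 hCC]
  rw [Matrix.trace_smul, htr1]
  norm_num

lemma hs10 : Real.sqrt (fidelity A1 A0) = ((3/5) : ℝ) := by
  rw [hf10, Real.sqrt_sq (by norm_num)]

lemma hf11 : fidelity A1 A1 = (1 : ℝ) ^ 2 := by
  have hC : (((1 : ℝ) : ℂ) • A1).PosSemidef := psd_smul hpsd1 (by norm_num)
  have hCC : (((1 : ℝ) : ℂ) • A1) * (((1 : ℝ) : ℂ) • A1) = A1 * A1 * A1 := by
    ext a b
    fin_cases a <;> fin_cases b <;> simp [A0, A1, A2, A3, w0, w1, w2, w3, Matrix.mul_apply, Matrix.conjTranspose_apply, Fin.sum_univ_succ, Matrix.smul_apply, smul_eq_mul] <;> (try norm_num)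
  rw [fid_val hpsd1 hC hproj1 hCC]
  rw [Matrix.trace_smul, htr1]
  norm_num

lemma hs11 : Real.sqrt (fidelity A1 A1) = (1 : ℝ) := by
  rw [hf11, Real.sqrt_sq (by norm_num)]

lemma hf12 : fidelity A1 A2 = ((4/5) : ℝ) ^ 2 := by
  have hC : ((((4/5) : ℝ) : ℂ) • A1).PosSemidef := psd_smul hpsd1 (by norm_num)
  have hCC : ((((4/5) : ℝ) : ℂ) • A1) * ((((4/5) : ℝ) : ℂ) • A1) = A1 * A2 * A1 := by
    ext a b
    fin_cases a <;> fin_cases b <;> simp [A0, A1, A2, A3, w0, w1, w2, w3, Matrix.mul_apply, Matrix.conjTranspose_apply, Fin.sum_univ_succ, Matrix.smul_apply, smul_eq_mul] <;> (try norm_num)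
  rw [fid_val hpsd1 hC hproj1 hCC]
  rw [Matrix.trace_smul, htr1]
  norm_num

lemma hs12 : Real.sqrt (fidelity A1 A2) = ((4/5) : ℝ) := by
  rw [hf12, Real.sqrt_sq (by norm_num)]

lemma hf13 : fidelity A1 A3 = (0 : ℝ) ^ 2 := by
  have hC : (((0 : ℝ) : ℂ) • A1).PosSemidef := psd_smul hpsd1 (by norm_num)
  have hCC : (((0 : ℝ) : ℂ) • A1) * (((0 : ℝ) : ℂ) • A1) = A1 * A3 * A1 := by
    ext a b
    fin_cases a <;> fin_cases b <;> simp [A0, A1, A2, A3, w0, w1, w2, w3, Matrix.mul_apply, Matrix.conjTranspose_apply, Fin.sum_univ_succ, Matrix.smul_apply, smul_eq_mul] <;> (try norm_num)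
  rw [fid_val hpsd1 hC hproj1 hCC]
  rw [Matrix.trace_smul, htr1]
  norm_num

lemma hs13 : Real.sqrt (fidelity A1 A3) = (0 : ℝ) := by
  rw [hf13, Real.sqrt_sq (by norm_num)]

lemma hf20 : fidelity A2 A0 = (0 : ℝ) ^ 2 := by
  have hC : (((0 : ℝ) : ℂ) • A2).PosSemidef := psd_smul hpsd2 (by norm_num)
  have hCC : (((0 : ℝ) : ℂ) • A2) * (((0 : ℝ) : ℂ) • A2) = A2 * A0 * A2 := by
    ext a b
    fin_cases a <;> fin_cases b <;> simp [A0, A1, A2, A3, w0, w1, w2, w3, Matrix.mul_apply, Matrix.conjTranspose_apply, Fin.sum_univ_succ, Matrix.smul_apply, smul_eq_mul] <;> (try norm_num)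
  rw [fid_val hpsd2 hC hproj2 hCC]
  rw [Matrix.trace_smul, htr2]
  norm_num

lemma hs20 : Real.sqrt (fidelity A2 A0) = (0 : ℝ) := by
  rw [hf20, Real.sqrt_sq (by norm_num)]

lemma hf21 : fidelity A2 A1 = ((4/5) : ℝ) ^ 2 := by
  have hC : ((((4/5) : ℝ) : ℂ) • A2).PosSemidef := psd_smul hpsd2 (by norm_num)
  have hCC : ((((4/5) : ℝ) : ℂ) • A2) * ((((4/5) : ℝ) : ℂ) • A2) = A2 * A1 * A2 := by
    ext a b
    fin_cases a <;> fin_cases b <;> simp [A0, A1, A2, A3, w0, w1, w2, w3, Matrix.mul_apply, Matrix.conjTranspose_apply, Fin.sum_univ_succ, Matrix.smul_apply, smul_eq_mul] <;> (try norm_num)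
  rw [fid_val hpsd2 hC hproj2 hCC]
  rw [Matrix.trace_smul, htr2]
  norm_num

lemma hs21 : Real.sqrt (fidelity A2 A1) = ((4/5) : ℝ) := by
  rw [hf21, Real.sqrt_sq (by norm_num)]

lemma hf22 : fidelity A2 A2 = (1 : ℝ) ^ 2 := by
  have hC : (((1 : ℝ) : ℂ) • A2).PosSemidef := psd_smul hpsd2 (by norm_num)
  have hCC : (((1 : ℝ) : ℂ) • A2) * (((1 : ℝ) : ℂ) • A2) = A2 * A2 * A2 := by
    ext a b
    fin_cases a <;> fin_cases b <;> simp [A0, A1, A2, A3, w0, w1, w2, w3, Matrix.mul_apply, Matrix.conjTranspose_apply, Fin.sum_univ_succ, Matrix.smul_apply, smul_eq_mul] <;> (try norm_num)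
  rw [fid_val hpsd2 hC hproj2 hCC]
  rw [Matrix.trace_smul, htr2]
  norm_num

lemma hs22 : Real.sqrt (fidelity A2 A2) = (1 : ℝ) := by
  rw [hf22, Real.sqrt_sq (by norm_num)]

lemma hf23 : fidelity A2 A3 = ((3/5) : ℝ) ^ 2 := by
  have hC : ((((3/5) : ℝ) : ℂ) • A2).PosSemidef := psd_smul hpsd2 (by norm_num)
  have hCC : ((((3/5) : ℝ) : ℂ) • A2) * ((((3/5) : ℝ) : ℂ) • A2) = A2 * A3 * A2 := by
    ext a b
    fin_cases a <;> fin_cases b <;> simp [A0, A1, A2, A3, w0, w1, w2, w3, Matrix.mul_apply, Matrix.conjTranspose_apply, Fin.sum_univ_succ, Matrix.smul_apply, smul_eq_mul] <;> (try norm_num)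
  rw [fid_val hpsd2 hC hproj2 hCC]
  rw [Matrix.trace_smul, htr2]
  norm_num

lemma hs23 : Real.sqrt (fidelity A2 A3) = ((3/5) : ℝ) := by
  rw [hf23, Real.sqrt_sq (by norm_num)]

lemma hf30 : fidelity A3 A0 = ((4/5) : ℝ) ^ 2 := by
  have hC : ((((4/5) : ℝ) : ℂ) • A3).PosSemidef := psd_smul hpsd3 (by norm_num)
  have hCC : ((((4/5) : ℝ) : ℂ) • A3) * ((((4/5) : ℝ) : ℂ) • A3) = A3 * A0 * A3 := by
    ext a b
    fin_cases a <;> fin_cases b <;> simp [A0, A1, A2, A3, w0, w1, w2, w3, Matrix.mul_apply, Matrix.conjTranspose_apply, Fin.sum_univ_succ, Matrix.smul_apply, smul_eq_mul] <;> (try norm_num)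
  rw [fid_val hpsd3 hC hproj3 hCC]
  rw [Matrix.trace_smul, htr3]
  norm_num

lemma hs30 : Real.sqrt (fidelity A3 A0) = ((4/5) : ℝ) := by
  rw [hf30, Real.sqrt_sq (by norm_num)]

lemma hf31 : fidelity A3 A1 = (0 : ℝ) ^ 2 := by
  have hC : (((0 : ℝ) : ℂ) • A3).PosSemidef := psd_smul hpsd3 (by norm_num)
  have hCC : (((0 : ℝ) : ℂ) • A3) * (((0 : ℝ) : ℂ) • A3) = A3 * A1 * A3 := by
    ext a b
    fin_cases a <;> fin_cases b <;> simp [A0, A1, A2, A3, w0, w1, w2, w3, Matrix.mul_apply, Matrix.conjTranspose_apply, Fin.sum_univ_succ, Matrix.smul_apply, smul_eq_mul] <;> (try norm_num)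
  rw [fid_val hpsd3 hC hproj3 hCC]
  rw [Matrix.trace_smul, htr3]
  norm_num

lemma hs31 : Real.sqrt (fidelity A3 A1) = (0 : ℝ) := by
  rw [hf31, Real.sqrt_sq (by norm_num)]

lemma hf32 : fidelity A3 A2 = ((3/5) : ℝ) ^ 2 := by
  have hC : ((((3/5) : ℝ) : ℂ) • A3).PosSemidef := psd_smul hpsd3 (by norm_num)
  have hCC : ((((3/5) : ℝ) : ℂ) • A3) * ((((3/5) : ℝ) : ℂ) • A3) = A3 * A2 * A3 := by
    ext a b
    fin_cases a <;> fin_cases b <;> simp [A0, A1, A2, A3, w0, w1, w2, w3, Matrix.mul_apply, Matrix.conjTranspose_apply, Fin.sum_univ_succ, Matrix.smul_apply, smul_eq_mul] <;> (try norm_num)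
  rw [fid_val hpsd3 hC hproj3 hCC]
  rw [Matrix.trace_smul, htr3]
  norm_num

lemma hs32 : Real.sqrt (fidelity A3 A2) = ((3/5) : ℝ) := by
  rw [hf32, Real.sqrt_sq (by norm_num)]

lemma hf33 : fidelity A3 A3 = (1 : ℝ) ^ 2 := by
  have hC : (((1 : ℝ) : ℂ) • A3).PosSemidef := psd_smul hpsd3 (by norm_num)
  have hCC : (((1 : ℝ) : ℂ) • A3) * (((1 : ℝ) : ℂ) • A3) = A3 * A3 * A3 := by
    ext a b
    fin_cases a <;> fin_cases b <;> simp [A0, A1, A2, A3, w0, w1, w2, w3, Matrix.mul_apply, Matrix.conjTranspose_apply, Fin.sum_univ_succ, Matrix.smul_apply, smul_eq_mul] <;> (try norm_num)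
  rw [fid_val hpsd3 hC hproj3 hCC]
  rw [Matrix.trace_smul, htr3]
  norm_num

lemma hs33 : Real.sqrt (fidelity A3 A3) = (1 : ℝ) := by
  rw [hf33, Real.sqrt_sq (by norm_num)]

/-- There exist four density matrices whose 4×4 matrix of root fidelities
`(E₄)ᵢⱼ = √F(ρᵢ; ρⱼ)` is not positive semidefinite. -/
theorem exists_four_states_rootFidelity_matrix_not_posSemidef :
    ∃ (d : ℕ) (ρ : Fin 4 → Matrix (Fin d) (Fin d) ℂ),
      (∀ i, (ρ i).PosSemidef) ∧ (∀ i, (ρ i).trace = 1) ∧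
      ¬ (Matrix.of fun i j : Fin 4 =>
          Real.sqrt (fidelity (ρ i) (ρ j))).PosSemidef := by
  refine ⟨2, ![A0, A1, A2, A3], ?_, ?_, ?_⟩
  · intro i
    fin_cases i
    exacts [hpsd0, hpsd1, hpsd2, hpsd3]
  · intro i
    fin_cases i
    exacts [htr0, htr1, htr2, htr3]
  · intro h
    have hx := h.dotProduct_mulVec_nonneg ![1, -1, 1, -1]
    have hEeq : (Matrix.of fun i j : Fin 4 =>
        Real.sqrt (fidelity (![A0, A1, A2, A3] i) (![A0, A1, A2, A3] j)))
        = !![1, (3/5 : ℝ), 0, (4/5 : ℝ); (3/5 : ℝ), 1, (4/5 : ℝ), 0;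
             0, (4/5 : ℝ), 1, (3/5 : ℝ); (4/5 : ℝ), 0, (3/5 : ℝ), 1] := by
      ext i j
      fin_cases i <;> fin_cases j
      exacts [hs00, hs01, hs02, hs03, hs10, hs11, hs12, hs13,
              hs20, hs21, hs22, hs23, hs30, hs31, hs32, hs33]
    rw [hEeq] at hx
    norm_num [dotProduct, Matrix.mulVec, Fin.sum_univ_succ] at hx
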